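/- Let C be a type, d : C → Multiset (C × C) a decomposition rule satisfying condition (D4), and K a commutative ring. Then the induced comultiplication Δ on C →₀ K is cocommutative: composing Δ with the canonical flip isomorphism (C →₀ K) ⊗[K] (C →₀ K) ≃ (C →₀ K) ⊗[K] (C →₀ K) equals Δ. (Proposition 2, cocommutativity part.) -/

import Mathlib

open TensorProduct

/-- The induced comultiplication on the free module `C →₀ K`. -/
noncomputable def deltaF {C : Type*} (K : Type*) [CommRing K]
    (d : C → Multiset (C × C)) : (C →₀ K) →ₗ[K] (C →₀ K) ⊗[K] (C →₀ K) :=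
  Finsupp.lift ((C →₀ K) ⊗[K] (C →₀ K)) K C fun Γ =>
    ((d Γ).map fun p =>
      Finsupp.single p.1 (1 : K) ⊗ₜ[K] Finsupp.single p.2 (1 : K)).sum

/-- Proposition 2 (cocommutativity part): under condition (D4) the induced
comultiplication is cocommutative. -/
theorem stmt4 {C : Type*} (K : Type*) [CommRing K]
    (d : C → Multiset (C × C))
    (hD4 : ∀ Γ : C, (d Γ).map Prod.swap = d Γ) :
    (TensorProduct.comm K (C →₀ K) (C →₀ K)).toLinearMap ∘ₗ deltaF K d =
      deltaF K d := by
  apply Finsupp.lhom_ext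
  intro Γ k
  have h1 : Finsupp.single Γ k = k • Finsupp.single Γ (1 : K) := by
    simp [Finsupp.smul_single]
  rw [h1, map_smul, map_smul]
  congr 1
  have hΔ : deltaF K d (Finsupp.single Γ (1 : K)) =
      ((d Γ).map fun p =>
        Finsupp.single p.1 (1 : K) ⊗ₜ[K] Finsupp.single p.2 (1 : K)).sum := by
    simp [deltaF]
  simp only [LinearMap.comp_apply, hΔ]
  rw [map_multiset_sum]
  conv_rhs => rw [← hD4 Γ]
  simp [Multiset.map_map, Function.comp]
  exact congrArg Multiset.sum (Multiset.map_congr rfl fun p _ => by simp)
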